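/- Let ℒ = {L_1,...,L_r} be a generally linear set of linear forms with L_i = a_0(i)x_0+...+a_n(i)x_n and all coefficients a_j(i) ≠ 0. Let M be the r×(n+1) matrix with entries M_{ij} = 1/a_j(i). If there exists a vector a ∈ ℂ^{n+1} with all coordinates nonzero and M a = 0, then ℒ is a strong Hadamard set. -/

import Mathlib

/-- Let ℒ = {L₁,…,L_r} (Lᵢ = Σⱼ aⱼ(i)xⱼ, coefficient vectors A i, all aⱼ(i) ≠ 0) be a
generally linear set, and M the r×(n+1) matrix with entries 1/aⱼ(i).  If there is a vector
a ∈ ℂ^(n+1) with all coordinates nonzero and M a = 0, then ℒ is a strong Hadamard set. -/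
theorem kernel_vector_implies_strong_hadamard (n r : ℕ) (hr : n + 1 ≤ r)
    (A : Fin r → Fin (n + 1) → ℂ) (hA : ∀ i j, A i j ≠ 0)
    (hgen : ∀ f : Fin (n + 1) → Fin r, Function.Injective f →
      LinearIndependent ℂ fun k => A (f k))
    (a : Fin (n + 1) → ℂ) (ha : ∀ j, a j ≠ 0)
    (hker : ∀ i, (∑ j, a j / A i j) = 0) :
    ∃ (b : Fin (n + 1) → ℂ) (P : Fin r → Fin (n + 1) → ℂ),
      (∀ i j, P i j ≠ 0) ∧
      (∀ i, ∃ c : ℂ, c ≠ 0 ∧ A i = fun j => c * (b j / P i j)) ∧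
      ∀ i, (∑ j, b j * P i j) = 0 := by
  choose s hs using fun j => IsAlgClosed.exists_pow_nat_eq (k := ℂ) (a j) zero_lt_two
  have hs0 : ∀ j, s j ≠ 0 := fun j h => ha j (by rw [← hs j, h]; ring)
  refine ⟨s, fun i j => s j / A i j, fun i j => div_ne_zero (hs0 j) (hA i j), ?_, ?_⟩
  · intro i
    refine ⟨1, one_ne_zero, funext fun j => ?_⟩
    field_simp
    rw [mul_div_assoc, div_self (hs0 j), mul_one]
  · intro i
    have := hker i
    calc (∑ j, s j * (s j / A i j)) = ∑ j, a j / A i j := by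
          refine Finset.sum_congr rfl fun j _ => ?_
          rw [← hs j]; ring
      _ = 0 := hker i
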